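/- There exists a constant η₀ > 0, depending only on n, p, q, s, such that for every admissible function u on ℝ^n with ‖∇u‖_p > 0 and ‖u‖_s > 0 there exists λ > 0 with F(τ_λ u) = η₀ · G(u)^k, where k = q(np + ps − ns)/(np + pq − ns); moreover 0 < k < q. -/

import Mathlib

open MeasureTheory Real Set

noncomputable section

abbrev Euc (n : ℕ) := EuclideanSpace ℝ (Fin n)

/-- The `L^r` norm of `u : ℝⁿ → ℝ` with respect to Lebesgue measure. -/
def lpNorm (n : ℕ) (r : ℝ) (u : Euc n → ℝ) : ℝ :=
  (∫ x : Euc n, |u x| ^ r) ^ (1 / r)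

/-- The `L^p` norm of the gradient of `u`. -/
def gradLpNorm (n : ℕ) (p : ℝ) (u : Euc n → ℝ) : ℝ :=
  (∫ x : Euc n, ‖fderiv ℝ u x‖ ^ p) ^ (1 / p)

/-- `u ∈ D^{p,s}(ℝⁿ)`: continuously differentiable with finite `L^s`, `L^q` and gradient `L^p`
norms. -/
structure Admissible (n : ℕ) (p s q : ℝ) (u : Euc n → ℝ) : Prop where
  smooth : ContDiff ℝ 1 u
  int_s : Integrable (fun x : Euc n => |u x| ^ s)
  int_q : Integrable (fun x : Euc n => |u x| ^ q)
  int_grad : Integrable (fun x : Euc n => ‖fderiv ℝ u x‖ ^ p)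

/-- The standing assumptions on the parameters `n, p, s, q, θ`. -/
structure Params (n : ℕ) (p s q θ : ℝ) : Prop where
  hn : 2 ≤ n
  hp : 1 < p
  hpn : p < n
  hs : 1 ≤ s
  hsq : s < q
  hq : q < n * p / (n - p)
  hθ0 : 0 < θ
  hθ1 : θ < 1
  hθ : θ / (n * p / (n - p)) + (1 - θ) / s = 1 / q

/-- The GNS quotient `‖∇u‖_p^θ ‖u‖_s^{1-θ} / ‖u‖_q`. -/
def GNSRatio (n : ℕ) (p s q θ : ℝ) (u : Euc n → ℝ) : ℝ :=
  gradLpNorm n p u ^ θ * lpNorm n s u ^ (1 - θ) / lpNorm n q u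

/-- The optimal Gagliardo–Nirenberg–Sobolev constant. -/
def GNSconst (n : ℕ) (p s q θ : ℝ) : ℝ :=
  sInf {c | ∃ u : Euc n → ℝ, Admissible n p s q u ∧ u ≠ 0 ∧ c = GNSRatio n p s q θ u}

/-- The GNS deficit `δ(u)`. -/
def deficit (n : ℕ) (p s q θ : ℝ) (u : Euc n → ℝ) : ℝ :=
  gradLpNorm n p u ^ θ * lpNorm n s u ^ (1 - θ) / (GNSconst n p s q θ * lpNorm n q u) - 1

/-- `v` is an optimizer for the GNS inequality. -/
def IsOptimizer (n : ℕ) (p s q θ : ℝ) (v : Euc n → ℝ) : Prop :=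
  Admissible n p s q v ∧ v ≠ 0 ∧
    gradLpNorm n p v ^ θ * lpNorm n s v ^ (1 - θ) = GNSconst n p s q θ * lpNorm n q v

/-- `v` is radially symmetric with non-increasing profile about the point `x₀`. -/
def IsCenter (n : ℕ) (v : Euc n → ℝ) (x₀ : Euc n) : Prop :=
  ∃ f : ℝ → ℝ, AntitoneOn f (Ici 0) ∧ ∀ x, v x = f ‖x - x₀‖

/-- The asymmetry `λ(u)`. -/
def asym (n : ℕ) (p s q θ : ℝ) (u : Euc n → ℝ) : ℝ :=
  sInf {r | ∃ v : Euc n → ℝ, IsOptimizer n p s q θ v ∧ lpNorm n q v = lpNorm n q u ∧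
    r = lpNorm n q (u - v) ^ q / lpNorm n q u ^ q}

/-- The relative asymmetry `λ(u|S)`: only optimizers whose center lies in `S` compete. -/
def relAsym (n : ℕ) (p s q θ : ℝ) (u : Euc n → ℝ) (S : Set (Euc n)) : ℝ :=
  sInf {r | ∃ (v : Euc n → ℝ) (x₀ : Euc n), IsOptimizer n p s q θ v ∧ IsCenter n v x₀ ∧
    x₀ ∈ S ∧ lpNorm n q v = lpNorm n q u ∧
    r = lpNorm n q (u - v) ^ q / lpNorm n q u ^ q}

/-- `u` is radial non-increasing: `u(x) = f(|x|)` for a non-increasing `f : [0,∞) → [0,∞)`. -/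
def RadialNonincreasing (n : ℕ) (u : Euc n → ℝ) : Prop :=
  ∃ f : ℝ → ℝ, AntitoneOn f (Ici 0) ∧ (∀ r ∈ Ici (0 : ℝ), 0 ≤ f r) ∧ ∀ x, u x = f ‖x‖

/-- Orthogonal reflection across the hyperplane `{x | ⟪v,x⟫ = c}` (for `‖v‖ = 1`). -/
def reflAcross (n : ℕ) (v : Euc n) (c : ℝ) (x : Euc n) : Euc n :=
  x - (2 * ((inner ℝ v x : ℝ) - c)) • v

/-- `u` is invariant under the reflections across `k` mutually orthogonal hyperplanes with
unit normals `v i` and offsets `c i`. -/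
def SymmetricAcrossOrtho (n k : ℕ) (u : Euc n → ℝ) (v : Fin k → Euc n) (c : Fin k → ℝ) : Prop :=
  (∀ i, ‖v i‖ = 1) ∧ (Pairwise fun i j => (inner ℝ (v i) (v j) : ℝ) = 0) ∧
    ∀ (i : Fin k) (x : Euc n), u (reflAcross n (v i) (c i) x) = u x

/-- `u` is `k`-symmetric. -/
def NSym (n k : ℕ) (u : Euc n → ℝ) : Prop :=
  ∃ (v : Fin k → Euc n) (c : Fin k → ℝ), SymmetricAcrossOrtho n k u v c

/-- The rescaling `τ_λ u (x) = λ^{n/q} u (λ x)`, which preserves the `L^q` norm. -/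
def rescale (n : ℕ) (q lam : ℝ) (u : Euc n → ℝ) : Euc n → ℝ :=
  fun x => lam ^ ((n : ℝ) / q) * u (lam • x)

/-- The functional `F(u) = ∫ |∇u|^p + ∫ |u|^s`. -/
def Ffun (n : ℕ) (p s : ℝ) (u : Euc n → ℝ) : ℝ :=
  (∫ x : Euc n, ‖fderiv ℝ u x‖ ^ p) + ∫ x : Euc n, |u x| ^ s

/-- The functional `G(u) = ‖∇u‖_p^θ ‖u‖_s^{1-θ}`. -/
def Gfun (n : ℕ) (p s θ : ℝ) (u : Euc n → ℝ) : ℝ :=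
  gradLpNorm n p u ^ θ * lpNorm n s u ^ (1 - θ)

/-- `φ(m) = inf {F(u) : ‖u‖_q^q = m}`. -/
def phi (n : ℕ) (p s q : ℝ) (m : ℝ) : ℝ :=
  sInf {c | ∃ u : Euc n → ℝ, Admissible n p s q u ∧ lpNorm n q u ^ q = m ∧ c = Ffun n p s u}

/-- Volume of the unit ball in `ℝⁿ`. -/
def unitBallVol (n : ℕ) : ℝ := (volume (Metric.ball (0 : Euc n) 1)).toReal

/-- The spherically symmetric decreasing rearrangement `u^⋆`. -/
def rearr (n : ℕ) (u : Euc n → ℝ) : Euc n → ℝ :=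
  fun x => sInf {t : ℝ | 0 < t ∧
    volume {y : Euc n | t < |u y|} ≤ ENNReal.ofReal (unitBallVol n * ‖x‖ ^ (n : ℝ))}

/-- The Pólya–Szegő deficit. -/
def deltaPS (n : ℕ) (p : ℝ) (u : Euc n → ℝ) : ℝ :=
  (gradLpNorm n p u - gradLpNorm n p (rearr n u)) / gradLpNorm n p (rearr n u)

/-- `u` is symmetric with respect to each coordinate hyperplane `{x_i = 0}`. -/
def CoordSym (n : ℕ) (u : Euc n → ℝ) : Prop :=
  ∀ (i : Fin n) (x : Euc n), u (WithLp.toLp 2 (Function.update (WithLp.ofLp x) i (-(x i)))) = u x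

lemma keyalg {A B a b : ℝ} (hA : 0 < A) (hB : 0 < B) (ha : 0 < a) (hb : 0 < b) :
    (b*B/(a*A)) ^ (a/(a+b)) * A + (b*B/(a*A)) ^ (-(b/(a+b))) * B
      = ((b/a) ^ (a/(a+b)) + (a/b) ^ (b/(a+b))) * (A ^ (b/(a+b)) * B ^ (a/(a+b))) := by
  have hab : 0 < a + b := by linarith
  set t := a/(a+b) with ht
  have h1t : b/(a+b) = 1 - t := by rw [ht, eq_sub_iff_add_eq, ← add_div, div_eq_one_iff_eq hab.ne']; ring
  have hR : b*B/(a*A) = (b/a) * (B/A) := by field_simp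
  rw [h1t, hR]
  have hba : (0:ℝ) < b/a := by positivity
  have hBA : (0:ℝ) < B/A := by positivity
  rw [Real.mul_rpow hba.le hBA.le, Real.mul_rpow hba.le hBA.le]
  have e1 : (B/A) ^ t * A = A ^ (1-t) * B ^ t := by
    rw [Real.div_rpow hB.le hA.le, Real.rpow_sub hA, Real.rpow_one]
    field_simp
  have e2 : (B/A) ^ (-(1-t)) * B = A ^ (1-t) * B ^ t := by
    rw [Real.rpow_neg hBA.le, Real.div_rpow hB.le hA.le, Real.rpow_sub hB, Real.rpow_one]
    have hBt : B ^ (1-t) ≠ 0 := by positivity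
    have hAt : A ^ (1-t) ≠ 0 := by positivity
    field_simp
  have e3 : (b/a) ^ (-(1-t)) = (a/b) ^ (1-t) := by
    rw [Real.rpow_neg hba.le, ← Real.inv_rpow hba.le, inv_div]
  rw [mul_assoc, e1, mul_assoc, e2, e3]
  ring

lemma fderiv_rescale (n : ℕ) (q lam : ℝ) (u : Euc n → ℝ) (hu : Differentiable ℝ u)
    (x : Euc n) :
    fderiv ℝ (rescale n q lam u) x = (lam ^ ((n:ℝ)/q) * lam) • fderiv ℝ u (lam • x) := by
  have hlin : HasFDerivAt (fun y : Euc n => lam • y)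
      (lam • ContinuousLinearMap.id ℝ (Euc n)) x := (hasFDerivAt_id x).const_smul lam
  have hu' : HasFDerivAt u (fderiv ℝ u (lam • x)) (lam • x) := (hu (lam • x)).hasFDerivAt
  have hcomp := hu'.comp x hlin
  have h2 : HasFDerivAt (rescale n q lam u)
      ((lam ^ ((n:ℝ)/q)) • ((fderiv ℝ u (lam • x)).comp (lam • ContinuousLinearMap.id ℝ (Euc n)))) x :=
    hcomp.const_mul _
  rw [h2.fderiv]
  have : (fderiv ℝ u (lam • x)).comp (lam • ContinuousLinearMap.id ℝ (Euc n))
      = lam • fderiv ℝ u (lam • x) := by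
    ext z
    simp [ContinuousLinearMap.map_smul]
  rw [this, smul_smul]

lemma int_grad_rescale (n : ℕ) (p q lam : ℝ) (u : Euc n → ℝ) (hu : Differentiable ℝ u)
    (hlam : 0 < lam) :
    ∫ x : Euc n, ‖fderiv ℝ (rescale n q lam u) x‖ ^ p
      = (lam ^ ((n:ℝ)/q) * lam) ^ p * ((lam ^ ((n:ℝ)) )⁻¹ * ∫ x : Euc n, ‖fderiv ℝ u x‖ ^ p) := by
  have hc : 0 < lam ^ ((n:ℝ)/q) * lam := by positivity
  have key : ∀ x : Euc n, ‖fderiv ℝ (rescale n q lam u) x‖ ^ p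
      = (lam ^ ((n:ℝ)/q) * lam) ^ p * ((fun y => ‖fderiv ℝ u y‖ ^ p) (lam • x)) := by
    intro x
    rw [fderiv_rescale n q lam u hu x, norm_smul, Real.norm_eq_abs, abs_of_pos hc,
      Real.mul_rpow hc.le (norm_nonneg _)]
  simp_rw [key]
  rw [integral_const_mul]
  congr 1
  rw [MeasureTheory.Measure.integral_comp_smul_of_nonneg volume (fun y => ‖fderiv ℝ u y‖ ^ p) lam (hR := hlam.le)]
  rw [smul_eq_mul, finrank_euclideanSpace_fin, ← Real.rpow_natCast lam n]

lemma int_pow_rescale (n : ℕ) (s q lam : ℝ) (u : Euc n → ℝ)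
    (hlam : 0 < lam) :
    ∫ x : Euc n, |rescale n q lam u x| ^ s
      = (lam ^ ((n:ℝ)/q)) ^ s * ((lam ^ ((n:ℝ)))⁻¹ * ∫ x : Euc n, |u x| ^ s) := by
  have hc : 0 < lam ^ ((n:ℝ)/q) := by positivity
  have key : ∀ x : Euc n, |rescale n q lam u x| ^ s
      = (lam ^ ((n:ℝ)/q)) ^ s * ((fun y => |u y| ^ s) (lam • x)) := by
    intro x
    rw [rescale]
    simp only []
    rw [abs_mul, abs_of_pos hc, Real.mul_rpow hc.le (abs_nonneg _)]
  simp_rw [key]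
  rw [integral_const_mul]
  congr 1
  rw [MeasureTheory.Measure.integral_comp_smul_of_nonneg volume (fun y => |u y| ^ s) lam (hR := hlam.le)]
  rw [smul_eq_mul, finrank_euclideanSpace_fin, ← Real.rpow_natCast lam n]

set_option maxHeartbeats 1000000 in
/-- there is a constant `η₀ > 0` such that every admissible `u` with nonzero
gradient and `L^s` norm admits a rescaling with `F(τ_λ u) = η₀ G(u)^k`, where
`k = q(np+ps-ns)/(np+pq-ns) ∈ (0, q)`. -/
theorem stmt_2 (n : ℕ) (p s q θ : ℝ) (hP : Params n p s q θ) :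
    ∃ η₀ > (0 : ℝ),
      (∀ u : Euc n → ℝ, Admissible n p s q u →
        0 < gradLpNorm n p u → 0 < lpNorm n s u →
        ∃ lam > (0 : ℝ), Ffun n p s (rescale n q lam u) =
          η₀ * Gfun n p s θ u ^ (q * (n * p + p * s - n * s) / (n * p + p * q - n * s))) ∧
      0 < q * (n * p + p * s - n * s) / (n * p + p * q - n * s) ∧
      q * (n * p + p * s - n * s) / (n * p + p * q - n * s) < q := by
  obtain ⟨hn, hp, hpn, hs, hsq, hq, hθ0, hθ1, hθeq⟩ := hP
  have hn2 : (2:ℝ) ≤ (n:ℝ) := by exact_mod_cast hn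
  have hp0 : (0:ℝ) < p := by linarith
  have hs0 : (0:ℝ) < s := by linarith
  have hq0 : (0:ℝ) < q := by linarith
  have hnp : (0:ℝ) < (n:ℝ) - p := by linarith
  have hq' : q * ((n:ℝ) - p) < (n:ℝ) * p := (lt_div_iff₀ hnp).mp hq
  have hD1 : (0:ℝ) < (n:ℝ) * p + p * s - (n:ℝ) * s := by nlinarith
  have hD2 : (0:ℝ) < (n:ℝ) * p + p * q - (n:ℝ) * s := by nlinarith
  set a : ℝ := p + p*(n:ℝ)/q - (n:ℝ) with hadef
  set b : ℝ := (n:ℝ) - s*(n:ℝ)/q with hbdef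
  have ha : 0 < a := by
    rw [hadef]
    have h : p + p*(n:ℝ)/q - (n:ℝ) = (p*q + p*(n:ℝ) - (n:ℝ)*q)/q := by field_simp
    rw [h]
    apply div_pos (by nlinarith) hq0
  have hb : 0 < b := by
    rw [hbdef]
    have h : (n:ℝ) - s*(n:ℝ)/q = ((n:ℝ)*(q - s))/q := by field_simp
    rw [h]
    apply div_pos (by nlinarith) hq0
  have hab : 0 < a + b := by linarith
  -- θ identity
  have hθv : θ * (q * ((n:ℝ) * p + p * s - (n:ℝ) * s)) = (n:ℝ) * p * (q - s) := by
    have hnp0 : (0:ℝ) < (n:ℝ) * p := by positivity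
    field_simp at hθeq
    linarith [hθeq]
  have hθval : θ = (n:ℝ)*p*(q-s)/(q*((n:ℝ)*p+p*s-(n:ℝ)*s)) := by
    rw [eq_div_iff (by positivity : (0:ℝ) < q*((n:ℝ)*p+p*s-(n:ℝ)*s)).ne']; linarith
  have habq : a + b = (p*q + p*(n:ℝ) - s*(n:ℝ))/q := by rw [hadef, hbdef]; field_simp; ring
  have habq' : p*q + p*(n:ℝ) - s*(n:ℝ) = (n:ℝ) * p + p * q - (n:ℝ) * s := by ring
  have e1 : θ / p * (q * ((n:ℝ) * p + p * s - (n:ℝ) * s) / ((n:ℝ) * p + p * q - (n:ℝ) * s))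
      = b / (a + b) := by
    rw [hθval, habq, habq', hbdef]
    generalize hX : (n:ℝ) * p + p * s - (n:ℝ) * s = X at hD1 hD2 ⊢
    generalize hY : (n:ℝ) * p + p * q - (n:ℝ) * s = Y at hD1 hD2 ⊢
    field_simp
  have e2 : (1 - θ) / s * (q * ((n:ℝ) * p + p * s - (n:ℝ) * s) / ((n:ℝ) * p + p * q - (n:ℝ) * s))
      = a / (a + b) := by
    rw [hθval, habq, habq', hadef]
    generalize hX : (n:ℝ) * p + p * s - (n:ℝ) * s = X at hD1 hD2 ⊢
    generalize hY : (n:ℝ) * p + p * q - (n:ℝ) * s = Y at hD1 hD2 ⊢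
    field_simp
    rw [← hX]
    ring
  refine ⟨(b/a) ^ (a/(a+b)) + (a/b) ^ (b/(a+b)), by positivity, fun u hu hgrad hlsn => ?_, ?_, ?_⟩
  · -- main part
    set A : ℝ := ∫ x : Euc n, ‖fderiv ℝ u x‖ ^ p with hAdef
    set B : ℝ := ∫ x : Euc n, |u x| ^ s with hBdef
    have hA0 : 0 ≤ A := integral_nonneg fun x => Real.rpow_nonneg (norm_nonneg _) _
    have hB0 : 0 ≤ B := integral_nonneg fun x => Real.rpow_nonneg (abs_nonneg _) _
    have hA : 0 < A := by
      rcases hA0.lt_or_eq with h | h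
      · exact h
      · exfalso
        rw [gradLpNorm, ← hAdef, ← h, Real.zero_rpow (by positivity : (1/p) ≠ 0)] at hgrad
        exact lt_irrefl 0 hgrad
    have hB : 0 < B := by
      rcases hB0.lt_or_eq with h | h
      · exact h
      · exfalso
        rw [_root_.lpNorm, ← hBdef, ← h, Real.zero_rpow (by positivity : (1/s) ≠ 0)] at hlsn
        exact lt_irrefl 0 hlsn
    set R : ℝ := b*B/(a*A) with hRdef
    have hR : 0 < R := by positivity
    set lam : ℝ := R ^ (1/(a+b)) with hlamdef
    have hlam : 0 < lam := Real.rpow_pos_of_pos hR _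
    refine ⟨lam, hlam, ?_⟩
    have hdiff : Differentiable ℝ u := hu.smooth.differentiable one_ne_zero
    have hF : Ffun n p s (rescale n q lam u) = lam ^ a * A + lam ^ (-b) * B := by
      rw [Ffun, int_grad_rescale n p q lam u hdiff hlam, int_pow_rescale n s q lam u hlam,
        ← hAdef, ← hBdef]
      have hga : (lam ^ ((n:ℝ)/q) * lam) ^ p * (lam ^ ((n:ℝ)))⁻¹ = lam ^ a := by
        rw [show lam ^ ((n:ℝ)/q) * lam = lam ^ ((n:ℝ)/q + 1) by
              rw [Real.rpow_add hlam, Real.rpow_one],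
          ← Real.rpow_mul hlam.le, ← Real.rpow_neg hlam.le, ← Real.rpow_add hlam]
        congr 1
        rw [hadef]; field_simp; ring
      have hgb : (lam ^ ((n:ℝ)/q)) ^ s * (lam ^ ((n:ℝ)))⁻¹ = lam ^ (-b) := by
        rw [← Real.rpow_mul hlam.le, ← Real.rpow_neg hlam.le, ← Real.rpow_add hlam]
        congr 1
        rw [hbdef]; field_simp; ring
      rw [← mul_assoc, ← mul_assoc, hga, hgb]
    rw [hF]
    have hla : lam ^ a = R ^ (a/(a+b)) := by
      rw [hlamdef, ← Real.rpow_mul hR.le]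
      congr 1; field_simp
    have hlb : lam ^ (-b) = R ^ (-(b/(a+b))) := by
      rw [hlamdef, ← Real.rpow_mul hR.le]
      congr 1; field_simp
    rw [hla, hlb, hRdef, keyalg hA hB ha hb]
    congr 1
    -- G ^ k = A^{b/(a+b)} * B^{a/(a+b)}
    have hGA : gradLpNorm n p u = A ^ (1/p) := rfl
    have hGB : lpNorm n s u = B ^ (1/s) := rfl
    rw [Gfun, hGA, hGB, Real.mul_rpow (by positivity) (by positivity),
      ← Real.rpow_mul hA.le, ← Real.rpow_mul hA.le, ← Real.rpow_mul hB.le, ← Real.rpow_mul hB.le,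
      ← e1, ← e2]
    congr 1 <;> · congr 1; ring
  · exact div_pos (by positivity) hD2
  · have hpsq : p * s < p * q := mul_lt_mul_of_pos_left hsq hp0
    rw [div_lt_iff₀ hD2]
    nlinarith [hpsq, hq0]

end
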